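/- Unique Forward EOPL always has a solution of type UF1: for every d ∈ ℕ⁺ and every pair of functions S : {0,1}^d → {0,1}^d and c : {0,1}^d → ℕ with S(0^d) ≠ 0^d and c(0^d) = 0, there exists a bit string v ∈ {0,1}^d with S(v) ≠ v and either S(S(v)) = S(v) or c(S(v)) ≤ c(v). -/
import Mathlib


/-- Unique Forward EOPL always has a solution of type UF1: for every `d ≥ 1` and all
functions `S : {0,1}^d → {0,1}^d` and `c : {0,1}^d → ℕ` with `S(0^d) ≠ 0^d` and
`c(0^d) = 0`, there is a bit string `v` with `S(v) ≠ v` and either `S(S(v)) = S(v)` or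
`c(S(v)) ≤ c(v)`. -/
theorem uf1_exists
    (d : ℕ) (hd : 0 < d)
    (S : (Fin d → Bool) → (Fin d → Bool)) (c : (Fin d → Bool) → ℕ)
    (hS : S (fun _ => false) ≠ (fun _ => false))
    (hc : c (fun _ => false) = 0) :
    ∃ v : Fin d → Bool, S v ≠ v ∧ (S (S v) = S v ∨ c (S v) ≤ c v) := by
  by_contra h
  push_neg at h
  set v0 : Fin d → Bool := fun _ => false with hv0
  -- every iterate is a node, and cost strictly increases
  have key : ∀ n : ℕ, S (S^[n] v0) ≠ S^[n] v0 ∧ c (S^[n] v0) < c (S^[n+1] v0) := by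
    intro n
    induction n with
    | zero =>
      refine ⟨hS, ?_⟩
      have := (h v0 hS).2
      simpa [Function.iterate_one] using this
    | succ n ih =>
      obtain ⟨hnode, _⟩ := ih
      have hnode' : S (S (S^[n] v0)) ≠ S (S^[n] v0) := (h _ hnode).1
      have hnode'' : S (S^[n+1] v0) ≠ S^[n+1] v0 := by
        simpa [Function.iterate_succ_apply'] using hnode'
      refine ⟨hnode'', ?_⟩
      have := (h _ hnode'').2
      simpa [Function.iterate_succ_apply'] using this
  have mono : StrictMono (fun n => c (S^[n] v0)) :=
    strictMono_nat_of_lt_succ fun n => (key n).2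
  have inj : Function.Injective (fun n => S^[n] v0) := by
    intro a b hab
    simp only [] at hab
    have : c (S^[a] v0) = c (S^[b] v0) := by rw [hab]
    exact mono.injective this
  exact not_injective_infinite_finite _ inj
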